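/- Let V = ⊕_{k∈ℤ} V_k be a nonzero finite-dimensional ℤ-graded complex vector space, let B_1, B_{−1} : V → V be linear maps of degrees +1 and −1 respectively with B_1 B_{−1} = B_{−1} B_1, and let ṽ ∈ V_0 be such that the triple is stable (every subspace S ⊆ V with B_1(S) ⊆ S, B_{−1}(S) ⊆ S and ṽ ∈ S equals V). Then there is a unique partition λ and a grading-preserving linear isomorphism g : V^λ → V with g ∘ B_1^λ = B_1 ∘ g, g ∘ B_{−1}^λ = B_{−1} ∘ g and g(b_{0,0}) = ṽ; in particular dim V_k = v_k(λ) for all k, so each quiver variety 𝔐(v) of type A_∞ for the basic representation is either empty or a single point. -/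

import Mathlib

/-- A partition: a non-increasing, eventually-zero sequence of non-negative integers.
`part k` is the `(k+1)`-st part `λ_{k+1}`. -/
structure PartitionSeq : Type where
  part : ℕ → ℕ
  mono : ∀ k, part (k + 1) ≤ part k
  ev_zero : ∃ N : ℕ, ∀ k, N ≤ k → part k = 0

namespace PartitionSeq

/-- The Young diagram of a partition: the box `b = (j, k)` in column `j ≥ 0` and row
`k ≥ 0` belongs to the diagram iff `j < λ_{k+1}`. -/
def diagram (lam : PartitionSeq) : Set (ℕ × ℕ) := {b | b.1 < lam.part b.2}

/-- The size `|λ| = Σ_i λ_i` of a partition. -/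
noncomputable def size (lam : PartitionSeq) : ℕ := ∑ᶠ k : ℕ, lam.part k

end PartitionSeq

/-- The residue `j - k` of the box `b = (j, k)`. -/
def boxResidue (b : ℕ × ℕ) : ℤ := (b.1 : ℤ) - (b.2 : ℤ)

/-- `v_i(λ)`: the number of boxes of the Young diagram of `λ` of residue `i`. -/
noncomputable def boxCount (lam : PartitionSeq) (i : ℤ) : ℕ :=
  {b ∈ lam.diagram | boxResidue b = i}.ncard

/-- The type of boxes of the Young diagram of `lam`. -/
def BoxOf (lam : PartitionSeq) : Type := {b : ℕ × ℕ // b.1 < lam.part b.2}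

/-- `V^λ`: the free `ℂ`-vector space on the boxes of the Young diagram of `lam`,
graded by residue. -/
abbrev YoungSpace (lam : PartitionSeq) : Type := BoxOf lam →₀ ℂ

/-- `B_1^λ`: the degree `+1` endomorphism `b_{j,k} ↦ b_{j+1,k}` (and `0` if the target
box is not in the diagram). -/
noncomputable def YB1 (lam : PartitionSeq) : YoungSpace lam →ₗ[ℂ] YoungSpace lam :=
  Finsupp.lift (YoungSpace lam) ℂ (BoxOf lam) fun b =>
    if h : b.1.1 + 1 < lam.part b.1.2 then Finsupp.single ⟨(b.1.1 + 1, b.1.2), h⟩ 1 else 0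

/-- `B_{-1}^λ`: the degree `-1` endomorphism `b_{j,k} ↦ b_{j,k+1}` (and `0` if the target
box is not in the diagram). -/
noncomputable def YBm1 (lam : PartitionSeq) : YoungSpace lam →ₗ[ℂ] YoungSpace lam :=
  Finsupp.lift (YoungSpace lam) ℂ (BoxOf lam) fun b =>
    if h : b.1.1 < lam.part (b.1.2 + 1) then Finsupp.single ⟨(b.1.1, b.1.2 + 1), h⟩ 1 else 0

/-- `lam` matches the data `(V, B1, Bm1, v)`: there is a grading-preserving linear
isomorphism `g : V^λ ≅ W` intertwining `B_1^λ, B_{-1}^λ` with `B1, Bm1` and sending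
`b_{0,0}` to `v`. -/
def IsYoungIso {W : Type*} [AddCommGroup W] [Module ℂ W] (V : ℤ → Submodule ℂ W)
    (B1 Bm1 : W →ₗ[ℂ] W) (v : W) (lam : PartitionSeq) : Prop :=
  ∃ g : YoungSpace lam ≃ₗ[ℂ] W,
    (∀ b : BoxOf lam, g (Finsupp.single b 1) ∈ V (boxResidue b.1)) ∧
    (g.toLinearMap ∘ₗ YB1 lam = B1 ∘ₗ g.toLinearMap) ∧
    (g.toLinearMap ∘ₗ YBm1 lam = Bm1 ∘ₗ g.toLinearMap) ∧
    ∃ h0 : 0 < lam.part 0, g (Finsupp.single (⟨(0, 0), h0⟩ : BoxOf lam) 1) = v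


section AuxLI

variable {W : Type*} [AddCommGroup W] [Module ℂ W]

/-- Nonzero iterates of an operator applied to a vector, up to the first vanishing power,
are linearly independent. -/
lemma li_fin_pow (T : W →ₗ[ℂ] W) (u : W) (n : ℕ)
    (hne : ∀ m, m < n → (T ^ m) u ≠ 0) (h0 : (T ^ n) u = 0) :
    LinearIndependent ℂ (fun m : Fin n => (T ^ (m : ℕ)) u) := by
  classical
  rw [Fintype.linearIndependent_iff]
  intro c hc
  by_contra hcon
  push_neg at hcon
  obtain ⟨i, hi⟩ := hcon
  have hn : 0 < n := lt_of_le_of_lt (Nat.zero_le _) i.2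
  set s : Finset (Fin n) := Finset.univ.filter (fun j => c j ≠ 0) with hs
  have hsne : s.Nonempty := ⟨i, Finset.mem_filter.mpr ⟨Finset.mem_univ _, hi⟩⟩
  obtain ⟨k0, hk0c, hk0min⟩ : ∃ k0 : Fin n, c k0 ≠ 0 ∧ ∀ j ∈ s, k0 ≤ j :=
    ⟨s.min' hsne, (Finset.mem_filter.mp (s.min'_mem hsne)).2, fun j hj => s.min'_le j hj⟩
  have hk0n : (k0 : ℕ) < n := k0.2
  have h2 : ∑ j : Fin n, c j • (T ^ (n - 1 - (k0 : ℕ) + (j : ℕ))) u = 0 := by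
    have h3 := congrArg (fun y => (T ^ (n - 1 - (k0 : ℕ))) y) hc
    simpa [map_sum, map_smul, pow_add, Module.End.mul_apply] using h3
  have h4 : ∑ j : Fin n, c j • (T ^ (n - 1 - (k0 : ℕ) + (j : ℕ))) u
      = c k0 • (T ^ (n - 1)) u := by
    rw [Finset.sum_eq_single k0]
    · have he : n - 1 - (k0 : ℕ) + (k0 : ℕ) = n - 1 := by omega
      rw [he]
    · intro j _ hj
      by_cases hcj : c j = 0
      · rw [hcj, zero_smul]
      · have hjs : j ∈ s := Finset.mem_filter.mpr ⟨Finset.mem_univ _, hcj⟩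
        have hle : (k0 : ℕ) ≤ (j : ℕ) := hk0min j hjs
        have hne' : (k0 : ℕ) ≠ (j : ℕ) := fun h => hj (Fin.ext h.symm)
        have hjn : (j : ℕ) < n := j.2
        rw [show n - 1 - (k0 : ℕ) + (j : ℕ) = ((j : ℕ) - 1 - (k0 : ℕ)) + n by omega,
          pow_add, Module.End.mul_apply, h0, map_zero, smul_zero]
    · intro h
      exact absurd (Finset.mem_univ k0) h
  rw [h4] at h2
  rcases smul_eq_zero.mp h2 with h | h
  · exact hk0c h
  · exact hne (n - 1) (by omega) h

end AuxLI

section AuxYoung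

lemma PartitionSeq.ext' {l l' : PartitionSeq} (h : ∀ k, l.part k = l'.part k) : l = l' := by
  cases l with
  | mk p m e =>
    cases l' with
    | mk p' m' e' =>
      have : p = p' := funext h
      subst this
      rfl

lemma YB1_single (lam : PartitionSeq) (b : BoxOf lam) :
    YB1 lam (Finsupp.single b 1) =
      (if h : b.1.1 + 1 < lam.part b.1.2 then
        Finsupp.single (⟨(b.1.1 + 1, b.1.2), h⟩ : BoxOf lam) 1 else 0 : YoungSpace lam) := by
  unfold YB1
  rw [Finsupp.lift_apply, Finsupp.sum_single_index (by rw [zero_smul]), one_smul]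

lemma YBm1_single (lam : PartitionSeq) (b : BoxOf lam) :
    YBm1 lam (Finsupp.single b 1) =
      (if h : b.1.1 < lam.part (b.1.2 + 1) then
        Finsupp.single (⟨(b.1.1, b.1.2 + 1), h⟩ : BoxOf lam) 1 else 0 : YoungSpace lam) := by
  unfold YBm1
  rw [Finsupp.lift_apply, Finsupp.sum_single_index (by rw [zero_smul]), one_smul]

lemma young_col (lam : PartitionSeq) (h0 : 0 < lam.part 0) (k : ℕ) :
    (YBm1 lam ^ k) (Finsupp.single (⟨(0, 0), h0⟩ : BoxOf lam) 1) =
      (if h : 0 < lam.part k then Finsupp.single (⟨(0, k), h⟩ : BoxOf lam) 1 else 0 : YoungSpace lam) := by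
  induction k with
  | zero => rw [pow_zero, Module.End.one_apply, dif_pos h0]
  | succ k ih =>
    rw [pow_succ', Module.End.mul_apply, ih]
    by_cases hk : 0 < lam.part k
    · rw [dif_pos hk]; exact YBm1_single lam ⟨(0, k), hk⟩
    · rw [dif_neg hk, map_zero, dif_neg]
      intro hc
      exact hk (lt_of_lt_of_le hc (lam.mono k))

lemma young_pow (lam : PartitionSeq) (h0 : 0 < lam.part 0) (j k : ℕ) :
    (YB1 lam ^ j) ((YBm1 lam ^ k) (Finsupp.single (⟨(0, 0), h0⟩ : BoxOf lam) 1)) =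
      (if h : j < lam.part k then Finsupp.single (⟨(j, k), h⟩ : BoxOf lam) 1 else 0 : YoungSpace lam) := by
  induction j with
  | zero =>
    rw [pow_zero, Module.End.one_apply, young_col lam h0 k]
  | succ j ih =>
    rw [pow_succ', Module.End.mul_apply, ih]
    by_cases hj : j < lam.part k
    · rw [dif_pos hj]; exact YB1_single lam ⟨(j, k), hj⟩
    · rw [dif_neg hj, map_zero, dif_neg]
      intro hc
      exact hj (by omega)

lemma isYoungIso_char {W : Type*} [AddCommGroup W] [Module ℂ W] (V : ℤ → Submodule ℂ W)
    (B1 Bm1 : W →ₗ[ℂ] W) (v : W) {lam : PartitionSeq}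
    (h : IsYoungIso V B1 Bm1 v lam) (j k : ℕ) :
    j < lam.part k ↔ (B1 ^ j) ((Bm1 ^ k) v) ≠ 0 := by
  obtain ⟨g, _, hgB1, hgBm1, h0, hgv⟩ := h
  have hint1 : ∀ x, g (YB1 lam x) = B1 (g x) := fun x => LinearMap.congr_fun hgB1 x
  have hintm : ∀ x, g (YBm1 lam x) = Bm1 (g x) := fun x => LinearMap.congr_fun hgBm1 x
  have hpow1 : ∀ (n : ℕ) (x), g ((YB1 lam ^ n) x) = (B1 ^ n) (g x) := by
    intro n
    induction n with
    | zero => intro x; rw [pow_zero, pow_zero, Module.End.one_apply, Module.End.one_apply]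
    | succ n ih =>
      intro x
      rw [pow_succ, pow_succ, Module.End.mul_apply, Module.End.mul_apply, ih, hint1]
  have hpowm : ∀ (n : ℕ) (x), g ((YBm1 lam ^ n) x) = (Bm1 ^ n) (g x) := by
    intro n
    induction n with
    | zero => intro x; rw [pow_zero, pow_zero, Module.End.one_apply, Module.End.one_apply]
    | succ n ih =>
      intro x
      rw [pow_succ, pow_succ, Module.End.mul_apply, Module.End.mul_apply, ih, hintm]
  have hkey : (B1 ^ j) ((Bm1 ^ k) v) = g ((YB1 lam ^ j) ((YBm1 lam ^ k)
      (Finsupp.single (⟨(0, 0), h0⟩ : BoxOf lam) 1))) := by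
    rw [hpow1, hpowm, hgv]
  rw [hkey, young_pow lam h0 j k]
  constructor
  · intro hlt
    rw [dif_pos hlt]
    simp only [ne_eq, EmbeddingLike.map_eq_zero_iff]
    exact fun h => one_ne_zero (Finsupp.single_eq_zero.mp h)
  · intro hne
    by_contra hlt
    rw [dif_neg hlt] at hne
    exact hne (map_zero g)

end AuxYoung
/-- a nonzero finite-dimensional `ℤ`-graded vector space `W = ⊕ V_k` with
commuting operators `B1, Bm1` of degrees `+1, -1` and a stable vector `v ∈ V_0` is
isomorphic, by a grading-preserving isomorphism intertwining the operators and sending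
`b_{0,0}` to `v`, to `(V^λ, B_1^λ, B_{-1}^λ, b_{0,0})` for a unique partition `λ`;
in particular `dim V_k = v_k(λ)`, so each type `A_∞` quiver variety for the basic
representation is either empty or a single point. -/
theorem quiver_variety_point {W : Type*} [AddCommGroup W] [Module ℂ W]
    [FiniteDimensional ℂ W] [Nontrivial W]
    (V : ℤ → Submodule ℂ W) (hdir : DirectSum.IsInternal V)
    (B1 Bm1 : W →ₗ[ℂ] W)
    (hB1 : ∀ k : ℤ, (V k).map B1 ≤ V (k + 1))
    (hBm1 : ∀ k : ℤ, (V k).map Bm1 ≤ V (k - 1))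
    (hcomm : B1 ∘ₗ Bm1 = Bm1 ∘ₗ B1)
    (v : W) (hv : v ∈ V 0)
    (hstab : ∀ S : Submodule ℂ W,
      (∀ x ∈ S, B1 x ∈ S) → (∀ x ∈ S, Bm1 x ∈ S) → v ∈ S → S = ⊤) :
    (∃ lam : PartitionSeq, IsYoungIso V B1 Bm1 v lam) ∧
    (∀ lam lam' : PartitionSeq,
      IsYoungIso V B1 Bm1 v lam → IsYoungIso V B1 Bm1 v lam' → lam = lam') ∧
    (∀ lam : PartitionSeq, IsYoungIso V B1 Bm1 v lam →
      ∀ k : ℤ, Module.finrank ℂ (V k) = boxCount lam k) := by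
  classical
  have hcomm' : Commute B1 Bm1 := hcomm
  set d := Module.finrank ℂ W with hd
  have hB1' : ∀ (k : ℤ) (x : W), x ∈ V k → B1 x ∈ V (k + 1) := fun k x hx =>
    hB1 k (Submodule.mem_map_of_mem hx)
  have hBm1' : ∀ (k : ℤ) (x : W), x ∈ V k → Bm1 x ∈ V (k + (-1)) := by
    intro k x hx
    have h1 := hBm1 k (Submodule.mem_map_of_mem hx)
    rwa [sub_eq_add_neg] at h1
  have hmemC : ∀ (C : W →ₗ[ℂ] W) (s : ℤ), (∀ (k : ℤ) (x : W), x ∈ V k → C x ∈ V (k + s)) →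
      ∀ (n : ℕ) (k : ℤ) (x : W), x ∈ V k → (C ^ n) x ∈ V (k + (n : ℤ) * s) := by
    intro C s hC n
    induction n with
    | zero => intro k x hx; simpa using hx
    | succ n ih =>
      intro k x hx
      have h1 := hC _ _ (ih k x hx)
      have h2 : (k + ((n + 1 : ℕ) : ℤ) * s) = k + (n : ℤ) * s + s := by push_cast; ring
      rw [pow_succ', Module.End.mul_apply, h2]
      exact h1
  have keynil : ∀ (C : W →ₗ[ℂ] W) (s : ℤ), s ≠ 0 →
      (∀ (k : ℤ) (x : W), x ∈ V k → C x ∈ V (k + s)) → C ^ d = 0 := by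
    intro C s hs hC
    have hvec : ∀ (k : ℤ) (x : W), x ∈ V k → (C ^ d) x = 0 := by
      intro k x hx
      by_contra hne
      have hne' : ∀ m : ℕ, m ≤ d → (C ^ m) x ≠ 0 := by
        intro m hm h0
        apply hne
        rw [show d = (d - m) + m by omega, pow_add, Module.End.mul_apply, h0, map_zero]
      have hinj : Function.Injective (fun i : Fin (d + 1) => k + ((i : ℕ) : ℤ) * s) := by
        intro a b hab
        simp only at hab
        have h3 : ((a : ℕ) : ℤ) * s = ((b : ℕ) : ℤ) * s := by linarith
        have h4 : ((a : ℕ) : ℤ) = ((b : ℕ) : ℤ) := mul_right_cancel₀ hs h3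
        exact Fin.ext (by exact_mod_cast h4)
      have hli : LinearIndependent ℂ (fun i : Fin (d + 1) => (C ^ ((i : ℕ))) x) := by
        refine iSupIndep.linearIndependent _ (hdir.submodule_iSupIndep.comp hinj) ?_ ?_
        · intro i
          exact hmemC C s hC (i : ℕ) k x hx
        · intro i
          exact hne' (i : ℕ) (by omega)
      have hcard := hli.fintype_card_le_finrank
      simp only [Fintype.card_fin] at hcard
      omega
    have htop := hdir.submodule_iSup_eq_top
    apply LinearMap.ext
    intro x
    have hx : x ∈ ⨆ k, V k := by rw [htop]; trivial
    rw [LinearMap.zero_apply]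
    refine Submodule.iSup_induction (motive := fun y => (C ^ d) y = 0) V hx ?_ ?_ ?_
    · intro k y hy; exact hvec k y hy
    · exact map_zero _
    · intro y z hy hz; rw [map_add, hy, hz, add_zero]
  have hB1nil : B1 ^ d = 0 := keynil B1 1 one_ne_zero hB1'
  have hBm1nil : Bm1 ^ d = 0 := keynil Bm1 (-1) (by norm_num) hBm1'
  set T : W →ₗ[ℂ] W := B1 * Bm1 with hT
  have hTnil : T ^ d = 0 := by rw [hT, hcomm'.mul_pow, hB1nil, zero_mul]
  set w : ℕ → ℕ → W := fun j k => (B1 ^ j) ((Bm1 ^ k) v) with hwdef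
  have hw00 : w 0 0 = v := by simp [hwdef]
  have hwj : ∀ j k, w (j + 1) k = B1 (w j k) := by
    intro j k
    simp only [hwdef]
    rw [pow_succ', Module.End.mul_apply]
  have hwk : ∀ j k, w j (k + 1) = Bm1 (w j k) := by
    intro j k
    simp only [hwdef]
    rw [pow_succ', Module.End.mul_apply]
    have h1 := LinearMap.ext_iff.mp (hcomm'.symm.pow_right j).eq ((Bm1 ^ k) v)
    simp only [Module.End.mul_apply] at h1
    exact h1.symm
  have hwT : ∀ (a b m : ℕ), w (a + m) (b + m) = (T ^ m) (w a b) := by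
    intro a b m
    induction m with
    | zero => simp
    | succ m ih =>
      show w ((a + m) + 1) ((b + m) + 1) = _
      rw [hwj, hwk, ih, pow_succ', Module.End.mul_apply, hT, Module.End.mul_apply]
  have hwmem : ∀ (j k : ℕ), w j k ∈ V ((j : ℤ) - (k : ℤ)) := by
    intro j k
    have h1 := hmemC Bm1 (-1) hBm1' k 0 v hv
    have h2 := hmemC B1 1 hB1' j _ _ h1
    have h3 : ((0 : ℤ) + (k : ℤ) * (-1) + (j : ℤ) * 1) = (j : ℤ) - (k : ℤ) := by ring
    rw [← h3]
    exact h2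
  have hwd : ∀ k, w d k = 0 := by
    intro k
    simp only [hwdef]
    rw [hB1nil, LinearMap.zero_apply]
  have hw_up : ∀ (k j j' : ℕ), j ≤ j' → w j k = 0 → w j' k = 0 := by
    intro k j j' hle h0
    induction j', hle using Nat.le_induction with
    | base => exact h0
    | succ m hm ih => rw [hwj m k, ih, map_zero]
  have hlt : ∀ j k, j < sInf {n | w n k = 0} ↔ w j k ≠ 0 := by
    intro j k
    constructor
    · intro h h0
      exact absurd (Nat.sInf_le (show j ∈ {n | w n k = 0} from h0)) (by omega)
    · intro hne
      by_contra hge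
      push_neg at hge
      have hmem0 : sInf {n | w n k = 0} ∈ {n | w n k = 0} := Nat.sInf_mem ⟨d, hwd k⟩
      exact hne (hw_up k _ j hge hmem0)
  have hmono : ∀ k, sInf {n | w n (k + 1) = 0} ≤ sInf {n | w n k = 0} := by
    intro k
    apply Nat.sInf_le
    show w (sInf {n | w n k = 0}) (k + 1) = 0
    have hmem0 : sInf {n | w n k = 0} ∈ {n | w n k = 0} := Nat.sInf_mem ⟨d, hwd k⟩
    rw [hwk]
    have hmem0' : w (sInf {n | w n k = 0}) k = 0 := hmem0
    rw [hmem0', map_zero]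
  have hev : ∀ k, d ≤ k → sInf {n | w n k = 0} = 0 := by
    intro k hk
    have h0 : w 0 k = 0 := by
      simp only [hwdef]
      rw [pow_zero, Module.End.one_apply, show k = (k - d) + d by omega, pow_add,
        Module.End.mul_apply, hBm1nil, LinearMap.zero_apply, map_zero]
    exact Nat.le_zero.mp (Nat.sInf_le h0)
  set lam0 : PartitionSeq := ⟨fun k => sInf {n | w n k = 0}, hmono, d, hev⟩ with hlam0
  have hpart : ∀ k, lam0.part k = sInf {n | w n k = 0} := fun k => by rw [hlam0]
  have hltp : ∀ j k, j < lam0.part k ↔ w j k ≠ 0 := by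
    intro j k; rw [hpart]; exact hlt j k
  have hv0 : v ≠ 0 := by
    intro hv0
    obtain ⟨x, hxne⟩ := exists_ne (0 : W)
    have hb1 : ∀ y ∈ (⊥ : Submodule ℂ W), B1 y ∈ (⊥ : Submodule ℂ W) := by
      intro y hy
      rw [Submodule.mem_bot] at hy ⊢
      rw [hy, map_zero]
    have hb2 : ∀ y ∈ (⊥ : Submodule ℂ W), Bm1 y ∈ (⊥ : Submodule ℂ W) := by
      intro y hy
      rw [Submodule.mem_bot] at hy ⊢
      rw [hy, map_zero]
    have hbot := hstab ⊥ hb1 hb2 (by rw [hv0]; exact Submodule.zero_mem ⊥)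
    apply hxne
    rw [← Submodule.mem_bot (R := ℂ), hbot]
    trivial
  have h00 : 0 < lam0.part 0 := (hltp 0 0).mpr (by rw [hw00]; exact hv0)
  -- the submodule generated by all w j k is everything
  set S := Submodule.span ℂ {x : W | ∃ j k, w j k = x} with hS
  have hSmem : ∀ j k, w j k ∈ S := fun j k => Submodule.subset_span ⟨j, k, rfl⟩
  have hSB1 : ∀ x ∈ S, B1 x ∈ S := by
    intro x hx
    rw [hS] at hx
    induction hx using Submodule.span_induction with
    | mem y hy =>
      obtain ⟨j, k, rfl⟩ := hy
      rw [← hwj]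
      exact hSmem (j + 1) k
    | zero => rw [map_zero]; exact S.zero_mem
    | add y z _ _ hy hz => rw [map_add]; exact S.add_mem hy hz
    | smul c y _ hy => rw [map_smul]; exact S.smul_mem c hy
  have hSBm1 : ∀ x ∈ S, Bm1 x ∈ S := by
    intro x hx
    rw [hS] at hx
    induction hx using Submodule.span_induction with
    | mem y hy =>
      obtain ⟨j, k, rfl⟩ := hy
      rw [← hwk]
      exact hSmem j (k + 1)
    | zero => rw [map_zero]; exact S.zero_mem
    | add y z _ _ hy hz => rw [map_add]; exact S.add_mem hy hz
    | smul c y _ hy => rw [map_smul]; exact S.smul_mem c hy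
  have hStop : S = ⊤ := hstab S hSB1 hSBm1 (hw00 ▸ hSmem 0 0)
  -- projection operators onto graded pieces
  set e := LinearEquiv.ofBijective (DirectSum.coeLinearMap V) hdir with he
  set π : ℤ → (W →ₗ[ℂ] W) :=
    fun r => (V r).subtype ∘ₗ (((DFinsupp.lapply r : (Π₀ i, V i) →ₗ[ℂ] V r)) ∘ₗ
      e.symm.toLinearMap) with hπ
  have hπ_same : ∀ (r : ℤ) (x : W), x ∈ V r → π r x = x := by
    intro r x hx
    rw [hπ]
    simp only [LinearMap.coe_comp, Function.comp_apply, LinearEquiv.coe_coe,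
      DFinsupp.lapply_apply, Submodule.coe_subtype]
    rw [he]
    exact congrArg Subtype.val (hdir.ofBijective_coeLinearMap_of_mem hx)
  have hπ_ne : ∀ (r s : ℤ) (x : W), x ∈ V s → s ≠ r → π r x = 0 := by
    intro r s x hx hne
    rw [hπ]
    simp only [LinearMap.coe_comp, Function.comp_apply, LinearEquiv.coe_coe,
      DFinsupp.lapply_apply, Submodule.coe_subtype]
    rw [he]
    exact congrArg Subtype.val (hdir.ofBijective_coeLinearMap_of_mem_ne hne hx)
  -- each graded piece is spanned by the boxes of its residue
  have spanV : ∀ r : ℤ, V r ≤ Submodule.span ℂ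
      (Set.range (fun b : {b : BoxOf lam0 // boxResidue b.1 = r} => w b.1.1.1 b.1.1.2)) := by
    intro r x hx
    have hxS : x ∈ S := by rw [hStop]; trivial
    have h1 : π r x ∈ Submodule.map (π r) S := Submodule.mem_map_of_mem hxS
    rw [hS, Submodule.map_span] at h1
    have h2 : (π r) '' {x : W | ∃ j k, w j k = x} ⊆
        (Submodule.span ℂ (Set.range
          (fun b : {b : BoxOf lam0 // boxResidue b.1 = r} => w b.1.1.1 b.1.1.2)) : Set W) := by
      rintro y ⟨z, ⟨j, k, rfl⟩, rfl⟩
      by_cases h0 : w j k = 0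
      · rw [h0, map_zero]
        exact Submodule.zero_mem _
      · by_cases hres : (j : ℤ) - (k : ℤ) = r
        · have hbox : j < lam0.part k := (hltp j k).mpr h0
          have hmem := hwmem j k
          rw [hres] at hmem
          rw [hπ_same r _ hmem]
          apply Submodule.subset_span
          exact ⟨⟨⟨(j, k), hbox⟩, hres⟩, rfl⟩
        · rw [hπ_ne r _ _ (hwmem j k) hres]
          exact Submodule.zero_mem _
    have h3 := Submodule.span_le.mpr h2 h1
    rwa [hπ_same r x hx] at h3
  -- the boxes of residue r give linearly independent vectors
  have hliV : ∀ r : ℤ, LinearIndependent ℂ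
      (fun b : {b : BoxOf lam0 // boxResidue b.1 = r} => w b.1.1.1 b.1.1.2) := by
    intro r
    set u : W := w (r.toNat) ((-r).toNat) with hu
    set nr := sInf {m | (T ^ m) u = 0} with hnr
    have hdmem : d ∈ {m : ℕ | (T ^ m) u = 0} := by
      rw [Set.mem_setOf_eq, hTnil, LinearMap.zero_apply]
    have hnru0 : nr ∈ {m : ℕ | (T ^ m) u = 0} := Nat.sInf_mem ⟨d, hdmem⟩
    have hnru : (T ^ nr) u = 0 := hnru0
    have hTup : ∀ m m', m ≤ m' → (T ^ m) u = 0 → (T ^ m') u = 0 := by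
      intro m m' hle h0
      rw [show m' = (m' - m) + m by omega, pow_add, Module.End.mul_apply, h0, map_zero]
    have hne : ∀ m, m < nr → (T ^ m) u ≠ 0 := by
      intro m hm h0
      exact absurd (Nat.sInf_le (show m ∈ {m | (T ^ m) u = 0} from h0)) (by omega)
    have hfin := li_fin_pow T u nr hne hnru
    have hwbox : ∀ b : {b : BoxOf lam0 // boxResidue b.1 = r},
        w b.1.1.1 b.1.1.2 = (T ^ (min b.1.1.1 b.1.1.2)) u := by
      intro b
      have hres : (b.1.1.1 : ℤ) - (b.1.1.2 : ℤ) = r := b.2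
      have hj : b.1.1.1 = r.toNat + min b.1.1.1 b.1.1.2 := by omega
      have hk : b.1.1.2 = (-r).toNat + min b.1.1.1 b.1.1.2 := by omega
      calc w b.1.1.1 b.1.1.2
          = w (r.toNat + min b.1.1.1 b.1.1.2) ((-r).toNat + min b.1.1.1 b.1.1.2) := by
            rw [← hj, ← hk]
        _ = (T ^ (min b.1.1.1 b.1.1.2)) u := by rw [hwT, hu]
    have hltn : ∀ b : {b : BoxOf lam0 // boxResidue b.1 = r}, min b.1.1.1 b.1.1.2 < nr := by
      intro b
      by_contra hge
      have h0 := hTup nr (min b.1.1.1 b.1.1.2) (by omega) hnru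
      rw [← hwbox b] at h0
      exact ((hltp b.1.1.1 b.1.1.2).mp b.1.2) h0
    set f : {b : BoxOf lam0 // boxResidue b.1 = r} → Fin nr :=
      fun b => ⟨min b.1.1.1 b.1.1.2, hltn b⟩ with hf
    have hfi : Function.Injective f := by
      intro a b hab
      have h1 : min a.1.1.1 a.1.1.2 = min b.1.1.1 b.1.1.2 := congrArg Fin.val hab
      have ha : (a.1.1.1 : ℤ) - a.1.1.2 = r := a.2
      have hb : (b.1.1.1 : ℤ) - b.1.1.2 = r := b.2
      apply Subtype.ext
      apply Subtype.ext
      have h2 : a.1.1.1 = b.1.1.1 ∧ a.1.1.2 = b.1.1.2 := by omega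
      exact Prod.ext h2.1 h2.2
    have hfun : (fun b : {b : BoxOf lam0 // boxResidue b.1 = r} => w b.1.1.1 b.1.1.2)
        = ((fun m : Fin nr => (T ^ (m : ℕ)) u) ∘ f) := funext fun b => hwbox b
    rw [hfun]
    exact hfin.comp f hfi
  -- basis of each graded piece
  have hbasis : ∀ r : ℤ, ∃ bs : Module.Basis {b : BoxOf lam0 // boxResidue b.1 = r} ℂ (V r),
      ∀ b, (bs b : W) = w b.1.1.1 b.1.1.2 := by
    intro r
    have hmemr : ∀ b : {b : BoxOf lam0 // boxResidue b.1 = r}, w b.1.1.1 b.1.1.2 ∈ V r := by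
      intro b
      have h1 := hwmem b.1.1.1 b.1.1.2
      rwa [show ((b.1.1.1 : ℤ) - b.1.1.2) = r from b.2] at h1
    set wV : {b : BoxOf lam0 // boxResidue b.1 = r} → V r :=
      fun b => ⟨w b.1.1.1 b.1.1.2, hmemr b⟩ with hwV
    have hli2 : LinearIndependent ℂ wV := by
      apply LinearIndependent.of_comp (V r).subtype
      exact hliV r
    have hsp : ⊤ ≤ Submodule.span ℂ (Set.range wV) := by
      have hmap : Submodule.map (V r).subtype (Submodule.span ℂ (Set.range wV))
          = Submodule.span ℂ (Set.range
            (fun b : {b : BoxOf lam0 // boxResidue b.1 = r} => w b.1.1.1 b.1.1.2)) := by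
        rw [Submodule.map_span]
        congr 1
        rw [← Set.range_comp]
        rfl
      rw [← Submodule.map_le_map_iff_of_injective (Submodule.injective_subtype (V r)),
        Submodule.map_top, Submodule.range_subtype, hmap]
      exact spanV r
    exact ⟨Module.Basis.mk hli2 hsp, fun b => by rw [Module.Basis.mk_apply]⟩
  choose Bs hBs using hbasis
  set bigB := hdir.collectedBasis Bs with hbigB
  set eqv : (Σ r : ℤ, {b : BoxOf lam0 // boxResidue b.1 = r}) ≃ BoxOf lam0 :=
    Equiv.sigmaFiberEquiv (fun b : BoxOf lam0 => boxResidue b.1) with heqv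
  set Bas := bigB.reindex eqv with hBasdef
  have hBasApply : ∀ b : BoxOf lam0, Bas b = w b.1.1 b.1.2 := by
    intro b
    rw [hBasdef, Module.Basis.reindex_apply, hbigB, hdir.collectedBasis_coe]
    exact hBs _ _
  have hg1 : ∀ b : BoxOf lam0, Bas.repr.symm (Finsupp.single b 1) = w b.1.1 b.1.2 := by
    intro b
    rw [Module.Basis.repr_symm_single_one, hBasApply]
  have hiso0 : IsYoungIso V B1 Bm1 v lam0 := by
    refine ⟨Bas.repr.symm, ?_, ?_, ?_, h00, ?_⟩
    · intro b
      rw [hg1]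
      exact hwmem b.1.1 b.1.2
    · apply Finsupp.lhom_ext'
      intro b
      apply LinearMap.ext_ring
      simp only [LinearMap.coe_comp, Function.comp_apply, Finsupp.lsingle_apply,
        LinearEquiv.coe_coe]
      rw [YB1_single]
      by_cases h : b.1.1 + 1 < lam0.part b.1.2
      · rw [dif_pos h, hg1, ← hwj]; exact hg1 ⟨(b.1.1 + 1, b.1.2), h⟩
      · rw [dif_neg h, map_zero, hg1]
        have h2 : w (b.1.1 + 1) b.1.2 = 0 := by
          by_contra h3
          exact h ((hltp _ _).mpr h3)
        rw [← hwj, h2]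
    · apply Finsupp.lhom_ext'
      intro b
      apply LinearMap.ext_ring
      simp only [LinearMap.coe_comp, Function.comp_apply, Finsupp.lsingle_apply,
        LinearEquiv.coe_coe]
      rw [YBm1_single]
      by_cases h : b.1.1 < lam0.part (b.1.2 + 1)
      · rw [dif_pos h, hg1, ← hwk]; exact hg1 ⟨(b.1.1, b.1.2 + 1), h⟩
      · rw [dif_neg h, map_zero, hg1]
        have h2 : w b.1.1 (b.1.2 + 1) = 0 := by
          by_contra h3
          exact h ((hltp _ _).mpr h3)
        rw [← hwk, h2]
    · exact (hg1 ⟨(0, 0), h00⟩).trans hw00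
  have huniq : ∀ lam lam' : PartitionSeq,
      IsYoungIso V B1 Bm1 v lam → IsYoungIso V B1 Bm1 v lam' → lam = lam' := by
    intro lam lam' h h'
    apply PartitionSeq.ext'
    intro k
    have c := fun j : ℕ => isYoungIso_char V B1 Bm1 v h j k
    have c' := fun j : ℕ => isYoungIso_char V B1 Bm1 v h' j k
    have hiff : ∀ j : ℕ, j < lam.part k ↔ j < lam'.part k :=
      fun j => (c j).trans (c' j).symm
    rcases Nat.lt_trichotomy (lam.part k) (lam'.part k) with h1 | h1 | h1
    · exact absurd ((hiff _).mpr h1) (lt_irrefl _)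
    · exact h1
    · exact absurd ((hiff _).mp h1) (lt_irrefl _)
  refine ⟨⟨lam0, hiso0⟩, huniq, ?_⟩
  intro lam hlam r
  rw [huniq lam lam0 hlam hiso0]
  haveI : Fintype {b : BoxOf lam0 // boxResidue b.1 = r} :=
    FiniteDimensional.fintypeBasisIndex (Bs r)
  rw [Module.finrank_eq_card_basis (Bs r)]
  have eqv2 : {b : BoxOf lam0 // boxResidue b.1 = r} ≃
      {p : ℕ × ℕ // p ∈ {b ∈ lam0.diagram | boxResidue b = r}} :=
    { toFun := fun b => ⟨b.1.1, b.1.2, b.2⟩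
      invFun := fun p => ⟨⟨p.1, p.2.1⟩, p.2.2⟩
      left_inv := fun b => rfl
      right_inv := fun p => rfl }
  show Fintype.card {b : BoxOf lam0 // boxResidue b.1 = r}
      = ({b ∈ lam0.diagram | boxResidue b = r}).ncard
  rw [← Nat.card_coe_set_eq, ← Nat.card_eq_fintype_card]
  exact Nat.card_congr eqv2
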